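/- Let Θ₁ > 0, α_∞ > 0, let λ be a nonzero finite positive Borel measure on ℝ supported in [0, Θ₁], let a ≥ 0 and let σ be a finite positive Borel measure supported in [0, Θ₁] such that for all real s > 0, α_∞ / ( s · ∫ dλ(Θ)/(1 + sΘ) ) = a/s + ∫ dσ(Θ)/(1 + sΘ). Then for every integer p ≥ 1, the moments satisfy the recursion μ_p(λ) = (μ₀(λ)/α_∞) · Σ_{k+j=p−1} μ_k(σ) μ_j(λ), where the sum is over nonnegative integers k, j with k + j = p − 1. -/

import Mathlib

open MeasureTheory Filter

noncomputable def momF (μ : Measure ℝ) (n : ℕ) : ℝ := ∫ Θ : ℝ, Θ ^ n ∂μ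
noncomputable def Fn (μ : Measure ℝ) (n : ℕ) (s : ℝ) : ℝ :=
  ∫ Θ : ℝ, Θ ^ n * (1 + s * Θ)⁻¹ ∂μ

lemma aux_ae {Θ₁ : ℝ} {μ : Measure ℝ} (hμ : μ (Set.Icc 0 Θ₁)ᶜ = 0) :
    ∀ᵐ x ∂μ, x ∈ Set.Icc 0 Θ₁ := by
  rw [MeasureTheory.ae_iff]
  have : {a : ℝ | ¬ a ∈ Set.Icc 0 Θ₁} = (Set.Icc 0 Θ₁)ᶜ := rfl
  rw [this]; exact hμ

lemma aux_int_pow {Θ₁ : ℝ} {μ : Measure ℝ} [IsFiniteMeasure μ]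
    (hμ : μ (Set.Icc 0 Θ₁)ᶜ = 0) (n : ℕ) : Integrable (fun Θ : ℝ => Θ ^ n) μ := by
  refine Integrable.mono' (integrable_const (Θ₁ ^ n)) ?_ ?_
  · exact (measurable_id.pow_const n).aestronglyMeasurable
  · filter_upwards [aux_ae hμ] with x hx
    rw [Real.norm_eq_abs, abs_pow, abs_of_nonneg hx.1]
    exact pow_le_pow_left₀ hx.1 hx.2 n

lemma aux_int_F {Θ₁ : ℝ} {μ : Measure ℝ} [IsFiniteMeasure μ]
    (hμ : μ (Set.Icc 0 Θ₁)ᶜ = 0) (n : ℕ) (s : ℝ) (hs : 0 ≤ s) :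
    Integrable (fun Θ : ℝ => Θ ^ n * (1 + s * Θ)⁻¹) μ := by
  refine Integrable.mono' (integrable_const (Θ₁ ^ n)) ?_ ?_
  · exact ((measurable_id.pow_const n).mul
      ((measurable_const.add (measurable_id.const_mul s)).inv)).aestronglyMeasurable
  · filter_upwards [aux_ae hμ] with x hx
    have h1 : (1:ℝ) ≤ 1 + s * x := le_add_of_nonneg_right (mul_nonneg hs hx.1)
    have h2 : (1 + s * x)⁻¹ ≤ 1 := inv_le_one_of_one_le₀ h1
    have h3 : (0:ℝ) ≤ (1 + s * x)⁻¹ := inv_nonneg.mpr (by linarith)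
    rw [Real.norm_eq_abs, abs_mul, abs_pow, abs_of_nonneg hx.1, abs_of_nonneg h3]
    calc x ^ n * (1 + s * x)⁻¹ ≤ x ^ n * 1 :=
          mul_le_mul_of_nonneg_left h2 (pow_nonneg hx.1 n)
      _ ≤ Θ₁ ^ n := by rw [mul_one]; exact pow_le_pow_left₀ hx.1 hx.2 n

lemma aux_step {Θ₁ : ℝ} {μ : Measure ℝ} [IsFiniteMeasure μ]
    (hμ : μ (Set.Icc 0 Θ₁)ᶜ = 0) (n : ℕ) (s : ℝ) (hs : 0 ≤ s) :
    Fn μ n s = momF μ n - s * Fn μ (n+1) s := by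
  unfold Fn momF
  rw [← integral_const_mul, ← integral_sub (aux_int_pow hμ n)
    ((aux_int_F hμ (n+1) s hs).const_mul s)]
  refine integral_congr_ae ?_
  filter_upwards [aux_ae hμ] with x hx
  have h1 : (0:ℝ) < 1 + s * x := by nlinarith [hx.1]
  field_simp
  ring

lemma aux_bound {Θ₁ : ℝ} {μ : Measure ℝ} [IsFiniteMeasure μ]
    (hμ : μ (Set.Icc 0 Θ₁)ᶜ = 0) (n : ℕ) (s : ℝ) (hs : 0 ≤ s) :
    |Fn μ n s| ≤ Θ₁ ^ n * (μ Set.univ).toReal := by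
  rw [← Real.norm_eq_abs]
  refine norm_integral_le_of_norm_le_const ?_
  filter_upwards [aux_ae hμ] with x hx
  have h1 : (1:ℝ) ≤ 1 + s * x := le_add_of_nonneg_right (mul_nonneg hs hx.1)
  have h2 : (1 + s * x)⁻¹ ≤ 1 := inv_le_one_of_one_le₀ h1
  have h3 : (0:ℝ) ≤ (1 + s * x)⁻¹ := inv_nonneg.mpr (by linarith)
  rw [Real.norm_eq_abs, abs_mul, abs_pow, abs_of_nonneg hx.1, abs_of_nonneg h3]
  calc x ^ n * (1 + s * x)⁻¹ ≤ x ^ n * 1 :=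
        mul_le_mul_of_nonneg_left h2 (pow_nonneg hx.1 n)
    _ ≤ Θ₁ ^ n := by rw [mul_one]; exact pow_le_pow_left₀ hx.1 hx.2 n

lemma aux_tendsto {Θ₁ : ℝ} {μ : Measure ℝ} [IsFiniteMeasure μ]
    (hμ : μ (Set.Icc 0 Θ₁)ᶜ = 0) (n : ℕ) :
    Tendsto (fun s : ℝ => Fn μ n s) (nhdsWithin 0 (Set.Ioi 0)) (nhds (momF μ n)) := by
  rw [tendsto_iff_dist_tendsto_zero]
  refine squeeze_zero' (g := fun s : ℝ => s * (Θ₁ ^ (n+1) * (μ Set.univ).toReal)) ?_ ?_ ?_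
  · exact Eventually.of_forall fun s => dist_nonneg
  · refine eventually_nhdsWithin_of_forall (fun s hs => ?_)
    have hs' : (0:ℝ) ≤ s := le_of_lt hs
    rw [Real.dist_eq, aux_step hμ n s hs']
    have := aux_bound hμ (n+1) s hs'
    calc |momF μ n - s * Fn μ (n+1) s - momF μ n| = s * |Fn μ (n+1) s| := by
          rw [sub_sub_cancel_left, abs_neg, abs_mul, abs_of_nonneg hs']
      _ ≤ s * (Θ₁ ^ (n+1) * (μ Set.univ).toReal) := mul_le_mul_of_nonneg_left this hs'
  · have : Tendsto (fun s : ℝ => s * (Θ₁ ^ (n+1) * (μ Set.univ).toReal))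
        (nhdsWithin 0 (Set.Ioi 0)) (nhds (0 * (Θ₁ ^ (n+1) * (μ Set.univ).toReal))) :=
      (tendsto_id.mono_left nhdsWithin_le_nhds).mul_const _
    simpa using this

lemma aux_mass_pos {μ : Measure ℝ} [IsFiniteMeasure μ] (hne : μ ≠ 0) :
    0 < (μ Set.univ).toReal := by
  refine ENNReal.toReal_pos ?_ (measure_ne_top μ _)
  simpa [Measure.measure_univ_eq_zero] using hne

lemma aux_pos {Θ₁ : ℝ} {μ : Measure ℝ} [IsFiniteMeasure μ] (hΘ₁ : 0 < Θ₁)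
    (hμ : μ (Set.Icc 0 Θ₁)ᶜ = 0) (hne : μ ≠ 0) (s : ℝ) (hs : 0 < s) :
    0 < Fn μ 0 s := by
  have hpos : (0:ℝ) < (1 + s * Θ₁)⁻¹ := inv_pos.mpr (by nlinarith)
  have h1 : (0:ℝ) < (μ Set.univ).toReal * (1 + s * Θ₁)⁻¹ :=
    mul_pos (aux_mass_pos hne) hpos
  have h2 : (μ Set.univ).toReal * (1 + s * Θ₁)⁻¹ ≤ Fn μ 0 s := by
    have : (μ Set.univ).toReal * (1 + s * Θ₁)⁻¹
        = ∫ _ : ℝ, (1 + s * Θ₁)⁻¹ ∂μ := by rw [integral_const]; rfl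
    rw [this]
    refine integral_mono_ae (integrable_const _) (aux_int_F hμ 0 s hs.le) ?_
    filter_upwards [aux_ae hμ] with x hx
    have hx1 : (0:ℝ) < 1 + s * x := by nlinarith [hx.1]
    have hx2 : 1 + s * x ≤ 1 + s * Θ₁ := by nlinarith [hx.2]
    simp only [pow_zero, one_mul]
    exact inv_anti₀ hx1 hx2
  linarith

theorem stmt14 (Θ₁ αinf : ℝ) (hΘ₁ : 0 < Θ₁) (hα : 0 < αinf)
    (lam : Measure ℝ) [IsFiniteMeasure lam] (hne : lam ≠ 0)
    (hsupp : lam (Set.Icc 0 Θ₁)ᶜ = 0)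
    (a : ℝ) (ha : 0 ≤ a)
    (σ : Measure ℝ) [IsFiniteMeasure σ] (hσsupp : σ (Set.Icc 0 Θ₁)ᶜ = 0)
    (hrep : ∀ s : ℝ, 0 < s →
      αinf / (s * ∫ Θ : ℝ, (1 + s * Θ)⁻¹ ∂lam) =
        a / s + ∫ Θ : ℝ, (1 + s * Θ)⁻¹ ∂σ) :
    ∀ p : ℕ, 1 ≤ p →
      (∫ Θ : ℝ, Θ ^ p ∂lam) =
        ((lam Set.univ).toReal / αinf) *
          ∑ k ∈ Finset.range p, (∫ Θ : ℝ, Θ ^ k ∂σ) * (∫ Θ : ℝ, Θ ^ (p - 1 - k) ∂lam) := by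
  -- basic rewriting of the representation into Fn form
  have hF0lam : ∀ s : ℝ, Fn lam 0 s = ∫ Θ : ℝ, (1 + s * Θ)⁻¹ ∂lam := by
    intro s; unfold Fn; simp only [pow_zero, one_mul]
  have hF0σ : ∀ s : ℝ, Fn σ 0 s = ∫ Θ : ℝ, (1 + s * Θ)⁻¹ ∂σ := by
    intro s; unfold Fn; simp only [pow_zero, one_mul]
  have hPpos : ∀ s : ℝ, 0 < s → 0 < Fn lam 0 s := fun s hs => aux_pos hΘ₁ hsupp hne s hs
  -- the basic algebraic identity
  have hB : ∀ s : ℝ, 0 < s →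
      αinf = a * Fn lam 0 s + s * (Fn σ 0 s * Fn lam 0 s) := by
    intro s hs
    have h := hrep s hs
    rw [← hF0lam, ← hF0σ] at h
    have hP := hPpos s hs
    field_simp at h
    have h2 : s * αinf = s * (a * Fn lam 0 s + s * (Fn σ 0 s * Fn lam 0 s)) := by
      linear_combination s * h
    exact mul_left_cancel₀ (ne_of_gt hs) h2
  -- the base moment identity αinf = a * m₀
  have hbase : αinf = a * momF lam 0 := by
    have t1 : Tendsto (fun s : ℝ => a * Fn lam 0 s + s * (Fn σ 0 s * Fn lam 0 s))
        (nhdsWithin 0 (Set.Ioi 0)) (nhds (a * momF lam 0 + 0 * (momF σ 0 * momF lam 0))) := by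
      exact ((aux_tendsto hsupp 0).const_mul a).add
        (((tendsto_id.mono_left nhdsWithin_le_nhds)).mul
          ((aux_tendsto hσsupp 0).mul (aux_tendsto hsupp 0)))
    rw [zero_mul, add_zero] at t1
    have t2 : Tendsto (fun _ : ℝ => αinf) (nhdsWithin (0:ℝ) (Set.Ioi 0))
        (nhds αinf) := tendsto_const_nhds
    have heq : (fun _ : ℝ => αinf) =ᶠ[nhdsWithin (0:ℝ) (Set.Ioi 0)]
        (fun s : ℝ => a * Fn lam 0 s + s * (Fn σ 0 s * Fn lam 0 s)) :=
      eventually_nhdsWithin_of_forall (fun s hs => hB s hs)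
    exact tendsto_nhds_unique (t2.congr' heq) t1
  -- limit extraction: from the functional recursion get the moment recursion
  have hlim : ∀ n : ℕ,
      (∀ s : ℝ, 0 < s → a * Fn lam (n+1) s =
        (∑ k ∈ Finset.range n, momF σ k * Fn lam (n-k) s) + Fn σ n s * Fn lam 0 s) →
      a * momF lam (n+1) =
        (∑ k ∈ Finset.range n, momF σ k * momF lam (n-k)) + momF σ n * momF lam 0 := by
    intro n hRn
    have t1 : Tendsto (fun s : ℝ => a * Fn lam (n+1) s)
        (nhdsWithin 0 (Set.Ioi 0)) (nhds (a * momF lam (n+1))) :=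
      (aux_tendsto hsupp (n+1)).const_mul a
    have t2 : Tendsto (fun s : ℝ =>
        (∑ k ∈ Finset.range n, momF σ k * Fn lam (n-k) s) + Fn σ n s * Fn lam 0 s)
        (nhdsWithin 0 (Set.Ioi 0))
        (nhds ((∑ k ∈ Finset.range n, momF σ k * momF lam (n-k)) + momF σ n * momF lam 0)) := by
      exact (tendsto_finset_sum _ (fun k _ => (aux_tendsto hsupp (n-k)).const_mul (momF σ k))).add
        ((aux_tendsto hσsupp n).mul (aux_tendsto hsupp 0))
    have heq : (fun s : ℝ => a * Fn lam (n+1) s) =ᶠ[nhdsWithin (0:ℝ) (Set.Ioi 0)]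
        (fun s : ℝ =>
          (∑ k ∈ Finset.range n, momF σ k * Fn lam (n-k) s) + Fn σ n s * Fn lam 0 s) :=
      eventually_nhdsWithin_of_forall (fun s hs => hRn s hs)
    exact tendsto_nhds_unique (t1.congr' heq) t2
  -- the functional recursion, by induction
  have key : ∀ n : ℕ, ∀ s : ℝ, 0 < s → a * Fn lam (n+1) s =
      (∑ k ∈ Finset.range n, momF σ k * Fn lam (n-k) s) + Fn σ n s * Fn lam 0 s := by
    intro n
    induction n with
    | zero =>
      intro s hs
      simp only [Finset.range_zero, Finset.sum_empty, zero_add]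
      have h := hB s hs
      have e1 : Fn lam 0 s = momF lam 0 - s * Fn lam 1 s := aux_step hsupp 0 s hs.le
      rw [e1] at h
      have : s * (a * Fn lam 1 s) = s * (Fn σ 0 s * (momF lam 0 - s * Fn lam 1 s)) := by
        linear_combination h - hbase
      have := mul_left_cancel₀ (ne_of_gt hs) this
      rw [← e1] at this
      exact this
    | succ n ih =>
      intro s hs
      have hHn := hlim n ih
      have e1 : Fn lam (n+1) s = momF lam (n+1) - s * Fn lam (n+2) s :=
        aux_step hsupp (n+1) s hs.le
      have e2 : Fn σ n s = momF σ n - s * Fn σ (n+1) s := aux_step hσsupp n s hs.le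
      have e3 : Fn lam 0 s = momF lam 0 - s * Fn lam 1 s := aux_step hsupp 0 s hs.le
      have e4 : (∑ k ∈ Finset.range n, momF σ k * Fn lam (n-k) s)
          = (∑ k ∈ Finset.range n, momF σ k * momF lam (n-k))
            - s * ∑ k ∈ Finset.range n, momF σ k * Fn lam (n+1-k) s := by
        rw [Finset.mul_sum, ← Finset.sum_sub_distrib]
        refine Finset.sum_congr rfl (fun k hk => ?_)
        have hk' : k < n := Finset.mem_range.mp hk
        have hnk : n - k + 1 = n + 1 - k := by omega
        rw [aux_step hsupp (n-k) s hs.le, hnk]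
        ring
      have h := ih s hs
      rw [e1, e2, e4] at h
      rw [Finset.sum_range_succ]
      have hn1 : n + 1 - n = 1 := by omega
      rw [hn1]
      have goal' : s * (a * Fn lam (n+1+1) s) =
          s * ((∑ k ∈ Finset.range n, momF σ k * Fn lam (n+1-k) s)
            + momF σ n * Fn lam 1 s + Fn σ (n+1) s * Fn lam 0 s) := by
        linear_combination hHn - h - momF σ n * e3
      have := mul_left_cancel₀ (ne_of_gt hs) goal'
      linarith [this]
  -- moment recursion
  have hH : ∀ n : ℕ, a * momF lam (n+1) =
      ∑ k ∈ Finset.range (n+1), momF σ k * momF lam (n-k) := by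
    intro n
    rw [Finset.sum_range_succ, Nat.sub_self]
    exact hlim n (key n)
  -- m₀ and positivity
  have hm0 : momF lam 0 = (lam Set.univ).toReal := by
    unfold momF; simp; rfl
  have hm0pos : 0 < momF lam 0 := by rw [hm0]; exact aux_mass_pos hne
  have hapos : 0 < a := by
    by_contra hcon
    push_neg at hcon
    have : a = 0 := le_antisymm hcon ha
    rw [this, zero_mul] at hbase
    linarith
  -- conclusion
  intro p hp
  obtain ⟨n, rfl⟩ : ∃ n : ℕ, p = n + 1 := ⟨p - 1, by omega⟩
  have hgoal := hH n
  have hconv : ∀ k : ℕ, n + 1 - 1 - k = n - k := fun k => by omega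
  have hms : ∀ k : ℕ, momF σ k = ∫ Θ : ℝ, Θ ^ k ∂σ := fun k => rfl
  have hml : ∀ k : ℕ, momF lam k = ∫ Θ : ℝ, Θ ^ k ∂lam := fun k => rfl
  have ha' : a = αinf / momF lam 0 := by
    field_simp
    linarith [hbase]
  calc (∫ Θ : ℝ, Θ ^ (n+1) ∂lam) = momF lam (n+1) := rfl
    _ = (momF lam 0 / αinf) * (a * momF lam (n+1)) := by
        rw [ha']; field_simp
    _ = ((lam Set.univ).toReal / αinf) *
          ∑ k ∈ Finset.range (n+1), (∫ Θ : ℝ, Θ ^ k ∂σ) * (∫ Θ : ℝ, Θ ^ (n+1-1-k) ∂lam) := by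
        rw [hgoal, hm0]
        simp only [Nat.add_sub_cancel]
        rfl
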